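/- Every Poisson bracket on the matrix algebra Mₙ(ℂ) with n ≥ 2 is of the form {a,b} = k·(ab − ba) for some constant k ∈ ℂ. -/

import Mathlib

/-- Every Poisson bracket on Mₙ(ℂ), n ≥ 2, is a constant multiple of the commutator. -/
theorem matrix_poisson_bracket_eq_scalar_commutator (n : ℕ) (hn : 2 ≤ n)
    (P : Matrix (Fin n) (Fin n) ℂ →ₗ[ℂ] Matrix (Fin n) (Fin n) ℂ →ₗ[ℂ] Matrix (Fin n) (Fin n) ℂ)
    (hanti : ∀ a b, P a b = - P b a)
    (hjac : ∀ a b c, P (P a b) c + P (P b c) a + P (P c a) b = 0)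
    (hleib : ∀ a b c, P a (b * c) = b * P a c + P a b * c) :
    ∃ k : ℂ, ∀ a b : Matrix (Fin n) (Fin n) ℂ, P a b = k • (a * b - b * a) := by
  haveI : NeZero n := ⟨by omega⟩
  have hone : (1 : Fin n) ≠ 0 := by
    intro h
    have h1 : ((1 : Fin n) : ℕ) = 1 % n := Fin.val_one' n
    rw [h] at h1
    simp at h1
    omega
  -- P is a derivation in the first argument as well
  have hleft : ∀ a b c, P (a * b) c = a * P b c + P a c * b := by
    intro a b c
    rw [hanti (a * b) c, hleib, hanti b c, hanti a c]
    noncomm_ring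
  -- the fundamental biderivation identity
  have key : ∀ x u y v : Matrix (Fin n) (Fin n) ℂ,
      (x * y - y * x) * P u v = P x y * (u * v - v * u) := by
    intro x u y v
    have h1 : P (x * u) (y * v)
        = y * (x * P u v + P x v * u) + (x * P u y + P x y * u) * v := by
      rw [hleib, hleft x u v, hleft x u y]
    have h2 : P (x * u) (y * v)
        = x * (y * P u v + P u y * v) + (y * P x v + P x y * v) * u := by
      rw [hleft x u (y * v), hleib u y v, hleib x y v]
    have h : y * (x * P u v + P x v * u) + (x * P u y + P x y * u) * v
        = x * (y * P u v + P u y * v) + (y * P x v + P x y * v) * u := h1.symm.trans h2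
    rw [← sub_eq_zero]
    have hh : (x * y - y * x) * P u v - P x y * (u * v - v * u)
        = (x * (y * P u v + P u y * v) + (y * P x v + P x y * v) * u)
          - (y * (x * P u v + P x v * u) + (x * P u y + P x y * u) * v) := by
      noncomm_ring
    rw [hh, ← h, sub_self]
  -- explicit invertible commutator: the cyclic shift matrix M
  set M : Matrix (Fin n) (Fin n) ℂ := Matrix.of (fun i j => if i = j + 1 then 1 else 0) with hMdef
  set M' : Matrix (Fin n) (Fin n) ℂ := Matrix.of (fun i j => if i + 1 = j then 1 else 0) with hM'def
  have hMM' : M * M' = 1 := by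
    ext i k
    rw [Matrix.mul_apply]
    have hterm : ∀ j : Fin n, M i j * M' j k
        = if j = i - 1 then (if i = k then (1:ℂ) else 0) else 0 := by
      intro j
      by_cases h : j = i - 1
      · subst h
        simp [hMdef, hM'def, sub_add_cancel]
      · have h' : i ≠ j + 1 := by
          intro he
          exact h (by rw [he]; rw [add_sub_cancel_right])
        simp [hMdef, hM'def, h', h]
    simp only [hterm]
    rw [Finset.sum_ite_eq' Finset.univ (i - 1) (fun _ => if i = k then (1:ℂ) else 0)]
    simp [Matrix.one_apply]
  have hM'M : M' * M = 1 := by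
    ext i k
    rw [Matrix.mul_apply]
    have hterm : ∀ j : Fin n, M' i j * M j k
        = if j = i + 1 then (if i = k then (1:ℂ) else 0) else 0 := by
      intro j
      by_cases h : j = i + 1
      · subst h
        by_cases hik : i = k
        · subst hik; simp [hMdef, hM'def]
        · have : i + 1 ≠ k + 1 := by
            intro he; exact hik (add_right_cancel he)
          simp [hMdef, hM'def, this, hik]
      · have h' : i + 1 ≠ j := fun he => h he.symm
        simp [hMdef, hM'def, h', h]
    simp only [hterm]
    rw [Finset.sum_ite_eq' Finset.univ (i + 1) (fun _ => if i = k then (1:ℂ) else 0)]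
    simp [Matrix.one_apply]
  -- M is a commutator
  set x₀ : Matrix (Fin n) (Fin n) ℂ := Matrix.diagonal (fun i => ((i : ℕ) : ℂ)) with hx₀def
  set y₀ : Matrix (Fin n) (Fin n) ℂ :=
    Matrix.of (fun i j => if i = j + 1 then (((i : ℕ) : ℂ) - ((j : ℕ) : ℂ))⁻¹ else 0) with hy₀def
  have hcomm : x₀ * y₀ - y₀ * x₀ = M := by
    ext i j
    rw [Matrix.sub_apply, hx₀def, Matrix.diagonal_mul, Matrix.mul_diagonal]
    by_cases h : i = j + 1
    · have hij : i ≠ j := by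
        intro he
        rw [he] at h
        exact hone (by simpa using (left_eq_add.mp h))
      have hval : (i : ℕ) ≠ (j : ℕ) := fun hv => hij (Fin.ext hv)
      have hne : ((i : ℕ) : ℂ) - ((j : ℕ) : ℂ) ≠ 0 := by
        rw [sub_ne_zero]
        exact_mod_cast hval
      simp only [hy₀def, hMdef, Matrix.of_apply, if_pos h]
      field_simp
    · simp [hy₀def, hMdef, h]
  -- the formula P x y = [x,y] * N
  set N : Matrix (Fin n) (Fin n) ℂ := P x₀ y₀ * M' with hNdef
  have formula : ∀ x y, P x y = (x * y - y * x) * N := by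
    intro x y
    have h := key x x₀ y y₀
    rw [hcomm] at h
    calc P x y = P x y * (M * M') := by rw [hMM', mul_one]
      _ = P x y * M * M' := by rw [mul_assoc]
      _ = (x * y - y * x) * P x₀ y₀ * M' := by rw [← h]
      _ = (x * y - y * x) * N := by rw [hNdef, mul_assoc]
  -- N commutes with all commutators
  have hcommN : ∀ u v, (u * v - v * u) * N = N * (u * v - v * u) := by
    intro u v
    have h := key x₀ u y₀ v
    rw [hcomm, formula u v, formula x₀ y₀, hcomm] at h
    -- h : M * ((u*v - v*u) * N) = M * N * (u*v - v*u)
    calc (u * v - v * u) * N = (M' * M) * ((u * v - v * u) * N) := by rw [hM'M, one_mul]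
      _ = M' * (M * ((u * v - v * u) * N)) := by rw [mul_assoc]
      _ = M' * (M * N * (u * v - v * u)) := by rw [h]
      _ = (M' * M) * N * (u * v - v * u) := by simp only [← mul_assoc]
      _ = N * (u * v - v * u) := by rw [hM'M, one_mul]
  -- N commutes with off-diagonal matrix units
  have hEN : ∀ i j : Fin n, i ≠ j →
      Matrix.single i j (1:ℂ) * N = N * Matrix.single i j (1:ℂ) := by
    intro i j hij
    have h := hcommN (Matrix.single i i (1:ℂ)) (Matrix.single i j (1:ℂ))
    rw [Matrix.single_mul_single_same, Matrix.single_mul_single_of_ne (h := Ne.symm hij)] at h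
    simpa using h
  -- entrywise consequence
  have hentry : ∀ i j l : Fin n, i ≠ j → N j l = if l = j then N i i else 0 := by
    intro i j l hij
    have h := congrFun (congrFun (hEN i j hij) i) l
    rw [Matrix.single_mul_apply_same, one_mul] at h
    by_cases hlj : l = j
    · subst hlj
      rw [Matrix.mul_single_apply_same, mul_one] at h
      simp [h]
    · rw [Matrix.mul_single_apply_of_ne (hbj := hlj)] at h
      simp [h, hlj]
  set k : ℂ := N 0 0 with hkdef
  have hNscalar : N = k • (1 : Matrix (Fin n) (Fin n) ℂ) := by
    ext j l
    have hjne : j + 1 ≠ j := by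
      intro he
      exact hone (by simpa using (left_eq_add.mp he.symm))
    have hdiag : (k • (1 : Matrix (Fin n) (Fin n) ℂ)) j l = if j = l then k else 0 := by
      simp [Matrix.one_apply]
    rw [hdiag]
    by_cases hjl : j = l
    · subst hjl
      rw [if_pos rfl]
      by_cases hj0 : j = 0
      · subst hj0; rfl
      · have h := hentry 0 j j (fun he => hj0 he.symm)
        rw [if_pos rfl] at h
        exact h
    · have h := hentry (j + 1) j l hjne
      rw [if_neg (fun he => hjl he.symm)] at h
      rw [if_neg hjl]
      exact h
  refine ⟨k, fun a b => ?_⟩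
  rw [formula a b, hNscalar, mul_smul_comm, mul_one]
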